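/- Let (Ω, μ) be a finite measure space and p ∈ (0,1). Let (ε_k) be a sequence of positive reals with ε_k → 0 and let (w_k) be a sequence in L²(Ω, μ) with w_k → w in L²(Ω, μ). Then ∫_Ω 2 ψ_{ε_k}'(w_k(x)²) · w_k(x)² dμ(x) → p ∫_Ω |w(x)|^p dμ(x). -/

import Mathlib

open MeasureTheory Filter

/-- The derivative `ψ_ε'` of the smoothed `p/2`-power function (for `ε > 0`). -/
noncomputable def psiD (p ε t : ℝ) : ℝ :=
  if t = 0 then (p / 2) * ε ^ (p - 2)
  else (p / 2) * min (ε ^ (p - 2)) (t ^ ((p - 2) / 2))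

lemma aux_rpow_add_le {p x y : ℝ} (hx : 0 ≤ x) (hy : 0 ≤ y) (hp : 0 ≤ p) (hp1 : p ≤ 1) :
    (x + y) ^ p ≤ x ^ p + y ^ p := by
  have h := NNReal.rpow_add_le_add_rpow (⟨x, hx⟩ : NNReal) (⟨y, hy⟩ : NNReal) hp hp1
  have h2 := NNReal.coe_le_coe.2 h
  push_cast at h2
  exact h2

lemma aux_abs_rpow_sub (p : ℝ) (hp0 : 0 < p) (hp1 : p ≤ 1) (a b : ℝ) :
    |(|a| ^ p - |b| ^ p)| ≤ |a - b| ^ p := by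
  have key : ∀ u v : ℝ, |u| ^ p - |v| ^ p ≤ |u - v| ^ p := by
    intro u v
    have h1 : |u| ≤ |u - v| + |v| := by
      calc |u| = |(u - v) + v| := by ring_nf
        _ ≤ |u - v| + |v| := abs_add_le _ _
    have h2 : |u| ^ p ≤ (|u - v| + |v|) ^ p :=
      Real.rpow_le_rpow (abs_nonneg _) h1 hp0.le
    have h3 := aux_rpow_add_le (abs_nonneg (u - v)) (abs_nonneg v) hp0.le hp1
    linarith
  rw [abs_sub_le_iff]
  exact ⟨key a b, by simpa [abs_sub_comm] using key b a⟩

lemma aux_rpow_le_eta (p η c : ℝ) (hp0 : 0 < p) (hp2 : p < 2) (hη : 0 < η) :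
    |c| ^ p ≤ η ^ p + η ^ (p - 2) * c ^ 2 := by
  rcases le_or_gt |c| η with h | h
  · have h1 : |c| ^ p ≤ η ^ p := Real.rpow_le_rpow (abs_nonneg _) h hp0.le
    have h2 : 0 ≤ η ^ (p - 2) * c ^ 2 := by positivity
    linarith
  · have hcpos : (0 : ℝ) < |c| := lt_trans hη h
    have h1 : |c| ^ (p - 2) ≤ η ^ (p - 2) :=
      Real.rpow_le_rpow_of_nonpos hη h.le (by linarith)
    have h2 : |c| ^ p = |c| ^ (p - 2) * c ^ 2 := by
      rw [← sq_abs c, ← Real.rpow_natCast |c| 2, ← Real.rpow_add hcpos]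
      norm_num
    have h3 : |c| ^ (p - 2) * c ^ 2 ≤ η ^ (p - 2) * c ^ 2 :=
      mul_le_mul_of_nonneg_right h1 (sq_nonneg c)
    have h4 : 0 ≤ η ^ p := (Real.rpow_pos_of_pos hη p).le
    linarith

lemma aux_min_sub (p ε a : ℝ) (hp0 : 0 < p) (hp2 : p < 2) (hε : 0 < ε) :
    |a| ^ p - ε ^ p ≤ min (ε ^ (p - 2) * a ^ 2) (|a| ^ p) ∧
      min (ε ^ (p - 2) * a ^ 2) (|a| ^ p) ≤ |a| ^ p := by
  refine ⟨?_, min_le_right _ _⟩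
  rcases le_or_gt ε |a| with h | h
  · have h1 : |a| ^ (p - 2) ≤ ε ^ (p - 2) :=
      Real.rpow_le_rpow_of_nonpos hε h (by linarith)
    have hapos : (0 : ℝ) < |a| := lt_of_lt_of_le hε h
    have h2 : |a| ^ p = |a| ^ (p - 2) * a ^ 2 := by
      rw [← sq_abs a, ← Real.rpow_natCast |a| 2, ← Real.rpow_add hapos]
      norm_num
    have h3 : |a| ^ p ≤ ε ^ (p - 2) * a ^ 2 := by
      rw [h2]; exact mul_le_mul_of_nonneg_right h1 (sq_nonneg a)
    have h4 : 0 ≤ ε ^ p := (Real.rpow_pos_of_pos hε p).le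
    have := le_min h3 le_rfl
    linarith [this]
  · have h1 : |a| ^ p ≤ ε ^ p := Real.rpow_le_rpow (abs_nonneg _) h.le hp0.le
    have h2 : 0 ≤ ε ^ (p - 2) * a ^ 2 := by positivity
    have h3 : 0 ≤ |a| ^ p := Real.rpow_nonneg (abs_nonneg _) p
    have := le_min h2 h3
    linarith [this]

lemma aux_psiD_eq (p ε a : ℝ) :
    2 * psiD p ε (a ^ 2) * a ^ 2 = p * min (ε ^ (p - 2) * a ^ 2) (|a| ^ p) := by
  rcases eq_or_ne a 0 with rfl | ha
  · simp [psiD]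
    exact Or.inr (Real.rpow_nonneg le_rfl p)
  · have ht : a ^ 2 ≠ 0 := pow_ne_zero _ ha
    rw [psiD, if_neg ht]
    have hmin : min (ε ^ (p - 2)) ((a ^ 2) ^ ((p - 2) / 2)) * a ^ 2
        = min (ε ^ (p - 2) * a ^ 2) ((a ^ 2) ^ ((p - 2) / 2) * a ^ 2) :=
      min_mul_of_nonneg _ _ (sq_nonneg a)
    have hpow : (a ^ 2) ^ ((p - 2) / 2) * a ^ 2 = |a| ^ p := by
      rw [← sq_abs a, ← Real.rpow_natCast |a| 2, ← Real.rpow_mul (abs_nonneg a),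
        ← Real.rpow_add (abs_pos.2 ha)]
      congr 1
      push_cast
      ring
    calc 2 * ((p / 2) * min (ε ^ (p - 2)) ((a ^ 2) ^ ((p - 2) / 2))) * a ^ 2
        = p * (min (ε ^ (p - 2)) ((a ^ 2) ^ ((p - 2) / 2)) * a ^ 2) := by ring
      _ = p * min (ε ^ (p - 2) * a ^ 2) (|a| ^ p) := by rw [hmin, hpow]

lemma aux_rpow_le_one_add_sq (p t : ℝ) (hp0 : 0 < p) (hp2 : p ≤ 2) :
    |t| ^ p ≤ 1 + t ^ 2 := by
  rcases le_or_gt |t| 1 with h | h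
  · have := Real.rpow_le_one (abs_nonneg t) h hp0.le
    nlinarith [sq_nonneg t]
  · have h1 : |t| ^ p ≤ |t| ^ (2 : ℝ) :=
      Real.rpow_le_rpow_of_exponent_le h.le hp2
    have h2 : |t| ^ (2 : ℝ) = t ^ 2 := by
      rw [show (2:ℝ) = ((2:ℕ):ℝ) by norm_num, Real.rpow_natCast, sq_abs]
    nlinarith [sq_nonneg t]

lemma aux_integral_sq {Ω : Type*} [MeasurableSpace Ω] {μ : Measure Ω} (u : Lp ℝ 2 μ) :
    ∫ x, (u x) ^ 2 ∂μ = ‖u‖ ^ 2 := by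
  rw [← real_inner_self_eq_norm_sq u, L2.inner_def]
  apply integral_congr_ae
  filter_upwards with x
  simp [RCLike.inner_apply, sq]

/-- On a finite measure space, for `p ∈ (0,1)`: if `ε_k > 0` with `ε_k → 0` and `w_k → w`
in `L²(Ω,μ)`, then `∫ 2 ψ_{ε_k}'(w_k²) w_k² dμ → p ∫ |w|^p dμ`. -/
theorem integral_psiD_sq_tendsto {Ω : Type*} [MeasurableSpace Ω] (μ : Measure Ω)
    [IsFiniteMeasure μ] (p : ℝ) (hp : p ∈ Set.Ioo (0 : ℝ) 1)
    (wk : ℕ → Lp ℝ 2 μ) (w : Lp ℝ 2 μ) (hconv : Tendsto wk atTop (nhds w))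
    (ε : ℕ → ℝ) (hε : ∀ k, 0 < ε k) (hεconv : Tendsto ε atTop (nhds 0)) :
    Tendsto (fun k => ∫ x, 2 * psiD p (ε k) ((wk k x) ^ 2) * (wk k x) ^ 2 ∂μ) atTop
      (nhds (p * ∫ x, |w x| ^ p ∂μ)) := by
  obtain ⟨hp0, hp1⟩ := hp
  have hp2 : p < 2 := by linarith
  set M : ℝ := (μ Set.univ).toReal with hM
  have hM0 : (0:ℝ) ≤ M := ENNReal.toReal_nonneg
  have hcontp : Continuous fun a : ℝ => |a| ^ p :=
    continuous_abs.rpow_const (fun x => Or.inr hp0.le)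
  -- integrability of |f|^p for f coercion of an L² difference/element
  have hIabsp : ∀ f : Ω → ℝ, AEStronglyMeasurable f μ → MemLp f 2 μ →
      Integrable (fun x => |f x| ^ p) μ := by
    intro f hfm hf2
    refine Integrable.mono' ((integrable_const (1:ℝ)).add hf2.integrable_sq)
      (hcontp.comp_aestronglyMeasurable hfm) ?_
    filter_upwards with x
    rw [Real.norm_eq_abs, abs_of_nonneg (Real.rpow_nonneg (abs_nonneg _) p)]
    exact aux_rpow_le_one_add_sq p _ hp0 hp2.le
  have hIw : Integrable (fun x => |w x| ^ p) μ :=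
    hIabsp _ (Lp.aestronglyMeasurable w) (Lp.memLp w)
  -- the auxiliary sequence η
  set η : ℕ → ℝ := fun k => ‖wk k - w‖ + 1 / ((k : ℝ) + 1) with hηdef
  have hηpos : ∀ k, 0 < η k := fun k => by
    have : (0:ℝ) < 1 / ((k:ℝ) + 1) := by positivity
    have h2 : (0:ℝ) ≤ ‖wk k - w‖ := norm_nonneg _
    simp only [hηdef]; linarith
  have hηge : ∀ k, ‖wk k - w‖ ≤ η k := fun k => by
    have : (0:ℝ) < 1 / ((k:ℝ) + 1) := by positivity
    simp only [hηdef]; linarith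
  -- key estimate
  have key : ∀ k, |(∫ x, 2 * psiD p (ε k) ((wk k x) ^ 2) * (wk k x) ^ 2 ∂μ)
      - p * ∫ x, |w x| ^ p ∂μ| ≤ p * ((ε k) ^ p * M + (η k) ^ p * (M + 1)) := by
    intro k
    set g : Ω → ℝ := fun x => min ((ε k) ^ (p - 2) * (wk k x) ^ 2) (|wk k x| ^ p) with hg
    have hrw : (∫ x, 2 * psiD p (ε k) ((wk k x) ^ 2) * (wk k x) ^ 2 ∂μ)
        = p * ∫ x, g x ∂μ := by
      rw [show (fun x => 2 * psiD p (ε k) ((wk k x) ^ 2) * (wk k x) ^ 2)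
          = fun x => p * g x from funext fun x => aux_psiD_eq p (ε k) (wk k x)]
      exact integral_const_mul p g
    -- integrability of g
    have hIwk2 : Integrable (fun x => (wk k x) ^ 2) μ := (Lp.memLp (wk k)).integrable_sq
    have hgm : AEStronglyMeasurable g μ := by
      have hc : Continuous fun a : ℝ => min ((ε k) ^ (p - 2) * a ^ 2) (|a| ^ p) :=
        Continuous.min (continuous_const.mul (continuous_pow 2))
          (continuous_abs.rpow_const (fun x => Or.inr hp0.le))
      exact hc.comp_aestronglyMeasurable (Lp.aestronglyMeasurable (wk k))
    have hgnonneg : ∀ x, 0 ≤ g x := fun x =>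
      le_min (mul_nonneg (Real.rpow_nonneg (hε k).le _) (sq_nonneg _))
        (Real.rpow_nonneg (abs_nonneg _) p)
    have hIg : Integrable g μ := by
      refine Integrable.mono' (hIwk2.const_mul ((ε k) ^ (p - 2))) hgm ?_
      filter_upwards with x
      rw [Real.norm_eq_abs, abs_of_nonneg (hgnonneg x)]
      exact min_le_left _ _
    -- difference integrand and its bound
    have hIdiffp : Integrable (fun x => |wk k x - w x| ^ p) μ :=
      hIabsp _ ((Lp.aestronglyMeasurable (wk k)).sub (Lp.aestronglyMeasurable w))
        ((Lp.memLp (wk k)).sub (Lp.memLp w))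
    have hIdiff2 : Integrable (fun x => (wk k x - w x) ^ 2) μ :=
      ((Lp.memLp (wk k)).sub (Lp.memLp w)).integrable_sq
    -- step: |∫ g - ∫ |w|^p| ≤ ∫ |g - |w|^p|
    have step1 : |(∫ x, g x ∂μ) - ∫ x, |w x| ^ p ∂μ|
        ≤ ∫ x, |g x - |w x| ^ p| ∂μ := by
      rw [← integral_sub hIg hIw]
      calc |∫ x, (g x - |w x| ^ p) ∂μ| = ‖∫ x, (g x - |w x| ^ p) ∂μ‖ := (Real.norm_eq_abs _).symm
        _ ≤ ∫ x, ‖g x - |w x| ^ p‖ ∂μ := norm_integral_le_integral_norm _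
        _ = ∫ x, |g x - |w x| ^ p| ∂μ := by simp [Real.norm_eq_abs]
    -- pointwise bound
    have step2 : ∫ x, |g x - |w x| ^ p| ∂μ ≤ ∫ x, ((ε k) ^ p + |wk k x - w x| ^ p) ∂μ := by
      refine integral_mono (hIg.sub hIw).abs ((integrable_const _).add hIdiffp) ?_
      intro x
      have hms := aux_min_sub p (ε k) (wk k x) hp0 hp2 (hε k)
      have habs := aux_abs_rpow_sub p hp0 hp1.le (wk k x) (w x)
      rw [abs_le] at habs ⊢
      constructor <;> [skip; skip] <;> simp only [hg] <;> obtain ⟨hms1, hms2⟩ := hms <;>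
        obtain ⟨ha1, ha2⟩ := habs
      · linarith
      · linarith
    have step3 : ∫ x, ((ε k) ^ p + |wk k x - w x| ^ p) ∂μ
        = (ε k) ^ p * M + ∫ x, |wk k x - w x| ^ p ∂μ := by
      rw [integral_add (integrable_const _) hIdiffp, integral_const, smul_eq_mul, mul_comm]; rfl
    have step4 : ∫ x, |wk k x - w x| ^ p ∂μ ≤ (η k) ^ p * M + (η k) ^ p := by
      have hmono : ∫ x, |wk k x - w x| ^ p ∂μ
          ≤ ∫ x, ((η k) ^ p + (η k) ^ (p - 2) * (wk k x - w x) ^ 2) ∂μ := by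
        refine integral_mono hIdiffp ((integrable_const _).add (hIdiff2.const_mul _)) ?_
        intro x
        exact aux_rpow_le_eta p (η k) _ hp0 hp2 (hηpos k)
      have hsq : ∫ x, (wk k x - w x) ^ 2 ∂μ = ‖wk k - w‖ ^ 2 := by
        rw [← aux_integral_sq (wk k - w)]
        apply integral_congr_ae
        filter_upwards [Lp.coeFn_sub (wk k) w] with x hx
        rw [hx]; simp
      have hrhs : ∫ x, ((η k) ^ p + (η k) ^ (p - 2) * (wk k x - w x) ^ 2) ∂μ
          = (η k) ^ p * M + (η k) ^ (p - 2) * ‖wk k - w‖ ^ 2 := by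
        rw [integral_add (integrable_const _) (hIdiff2.const_mul _), integral_const,
          smul_eq_mul, mul_comm, integral_const_mul, hsq]; rfl
      have hlast : (η k) ^ (p - 2) * ‖wk k - w‖ ^ 2 ≤ (η k) ^ p := by
        have h1 : ‖wk k - w‖ ^ 2 ≤ (η k) ^ 2 :=
          pow_le_pow_left₀ (norm_nonneg _) (hηge k) 2
        have h2 : (η k) ^ (p - 2) * (η k : ℝ) ^ (2:ℕ) = (η k) ^ p := by
          rw [← Real.rpow_natCast (η k) 2, ← Real.rpow_add (hηpos k)]
          norm_num
        calc (η k) ^ (p - 2) * ‖wk k - w‖ ^ 2 ≤ (η k) ^ (p - 2) * (η k) ^ 2 :=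
              mul_le_mul_of_nonneg_left h1 (Real.rpow_nonneg (hηpos k).le _)
          _ = (η k) ^ p := h2
      linarith
    have hnn : 0 ≤ ∫ x, |g x - |w x| ^ p| ∂μ := integral_nonneg fun x => abs_nonneg _
    rw [hrw, ← mul_sub, abs_mul, abs_of_nonneg hp0.le]
    have : |(∫ x, g x ∂μ) - ∫ x, |w x| ^ p ∂μ| ≤ (ε k) ^ p * M + ((η k) ^ p * M + (η k) ^ p) := by
      calc |(∫ x, g x ∂μ) - ∫ x, |w x| ^ p ∂μ| ≤ ∫ x, |g x - |w x| ^ p| ∂μ := step1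
        _ ≤ ∫ x, ((ε k) ^ p + |wk k x - w x| ^ p) ∂μ := step2
        _ = (ε k) ^ p * M + ∫ x, |wk k x - w x| ^ p ∂μ := step3
        _ ≤ (ε k) ^ p * M + ((η k) ^ p * M + (η k) ^ p) := by linarith [step4]
    have hfin : (ε k) ^ p * M + ((η k) ^ p * M + (η k) ^ p)
        = (ε k) ^ p * M + (η k) ^ p * (M + 1) := by ring
    rw [hfin] at this
    exact mul_le_mul_of_nonneg_left this hp0.le
  -- squeeze
  rw [tendsto_iff_dist_tendsto_zero]
  simp only [Real.dist_eq]
  refine squeeze_zero (fun k => abs_nonneg _) key ?_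
  have hεp : Tendsto (fun k => (ε k) ^ p) atTop (nhds 0) := by
    have hc : ContinuousAt (fun t : ℝ => t ^ p) 0 :=
      Real.continuousAt_rpow_const 0 p (Or.inr hp0.le)
    have := hc.tendsto.comp hεconv
    simpa [Real.zero_rpow hp0.ne', Function.comp_def] using this
  have hηto : Tendsto η atTop (nhds 0) := by
    have h1 : Tendsto (fun k => ‖wk k - w‖) atTop (nhds 0) := by
      rw [tendsto_iff_norm_sub_tendsto_zero] at hconv
      exact hconv
    have h2 := h1.add tendsto_one_div_add_atTop_nhds_zero_nat
    rw [hηdef]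
    simpa [one_div] using h2
  have hηp : Tendsto (fun k => (η k) ^ p) atTop (nhds 0) := by
    have hc : ContinuousAt (fun t : ℝ => t ^ p) 0 :=
      Real.continuousAt_rpow_const 0 p (Or.inr hp0.le)
    have := hc.tendsto.comp hηto
    simpa [Real.zero_rpow hp0.ne', Function.comp_def] using this
  have := (((hεp.mul_const M).add (hηp.mul_const (M + 1))).const_mul p)
  simpa using this
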